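/- Let A be a real n×m matrix such that for every S ⊆ {1,…,m} with |S| ≥ n the submatrix A_S has full row rank n, and let k be an integer with n ≤ k ≤ m. Then ∑_{S ⊆ {1,…,m}, |S| = k} det(A_S A_Sᵀ) · tr((A_S A_Sᵀ)^{-1}) ≤ ((m−n+1)/(k−n+1)) · C(m−n, k−n) · det(A Aᵀ) · tr((A Aᵀ)^{-1}). Equivalently, if S is sampled by dual volume sampling, i.e., with probability proportional to det(A_S A_Sᵀ), then E[‖A_S^†‖_F²] ≤ ((m−n+1)/(k−n+1)) ‖A^†‖_F². -/
import Mathlib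


open Matrix BigOperators

/-- The n×n Gram matrix `A_S * A_Sᵀ` of the columns of `A` indexed by `S`. -/
def dvsGram {n m : ℕ} (A : Matrix (Fin n) (Fin m) ℝ) (S : Finset (Fin m)) :
    Matrix (Fin n) (Fin n) ℝ :=
  Matrix.of fun i j => ∑ t ∈ S, A i t * A j t

/-- The `n × |T|` submatrix of `A` formed by the columns indexed by `T`. -/
def dvsCols {n m : ℕ} (A : Matrix (Fin n) (Fin m) ℝ) (T : Finset (Fin m)) :
    Matrix (Fin n) {x // x ∈ T} ℝ :=
  A.submatrix id (fun p => p.1)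

private lemma dvs_adj_diag {r : ℕ} (M : Matrix (Fin (r+1)) (Fin (r+1)) ℝ) (i : Fin (r+1)) :
    M.adjugate i i = (M.submatrix i.succAbove i.succAbove).det := by
  rw [Matrix.adjugate_apply, Matrix.det_succ_row _ i, Finset.sum_eq_single i]
  · have hsub : (M.updateRow i (Pi.single i 1)).submatrix i.succAbove i.succAbove
        = M.submatrix i.succAbove i.succAbove := by
      ext a b
      simp [Matrix.submatrix_apply, Matrix.updateRow_ne (Fin.succAbove_ne i a)]
    rw [hsub, Matrix.updateRow_self]
    simp [Even.neg_one_pow ⟨(i:ℕ), rfl⟩]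
  · intro j _ hj
    rw [Matrix.updateRow_self]
    simp [Pi.single_eq_of_ne hj]
  · intro h
    exact absurd (Finset.mem_univ i) h

private lemma dvs_gram_expand {r m : ℕ} (w : Fin m → Fin r → ℝ) (S : Finset (Fin m)) :
    (Matrix.of fun a b => ∑ t ∈ S, w t a * w t b).det
      = ∑ p ∈ Fintype.piFinset (fun _ : Fin r => S),
          (∏ a, w (p a) a) * (Matrix.of fun a b => w (p a) b).det := by
  have h0 : (Matrix.of fun a b => ∑ t ∈ S, w t a * w t b).det
      = (Matrix.detRowAlternating (R := ℝ) (n := Fin r)).toMultilinearMap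
          (fun a : Fin r => ∑ t ∈ S, (w t a) • (w t)) := by
    congr 1
    funext a
    funext b
    simp [Finset.sum_apply]
  rw [h0, MultilinearMap.map_sum_finset]
  refine Finset.sum_congr rfl fun p _ => ?_
  rw [MultilinearMap.map_smul_univ]
  rfl

private lemma dvs_gramCB {r m : ℕ} (w : Fin m → Fin r → ℝ) (S : Finset (Fin m)) :
    (Matrix.of fun a b => ∑ t ∈ S, w t a * w t b).det
      = ∑ T ∈ S.powersetCard r, (Matrix.of fun a b => ∑ t ∈ T, w t a * w t b).det := by
  classical
  set term : (Fin r → Fin m) → ℝ :=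
    fun p => (∏ a, w (p a) a) * (Matrix.of fun a b => w (p a) b).det with hterm
  have hzero : ∀ p : Fin r → Fin m, ¬ Function.Injective p → term p = 0 := by
    intro p hp
    obtain ⟨a, b, hab, hne⟩ := Function.not_injective_iff.mp hp
    have hdet : (Matrix.of fun a b => w (p a) b).det = 0 := by
      refine Matrix.det_zero_of_row_eq hne ?_
      funext c
      simp [hab]
    simp [hterm, hdet]
  have hexp : ∀ T : Finset (Fin m),
      (Matrix.of fun a b => ∑ t ∈ T, w t a * w t b).det
        = ∑ p ∈ (Fintype.piFinset fun _ : Fin r => T).filter Function.Injective, term p := by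
    intro T
    rw [dvs_gram_expand]
    exact (Finset.sum_filter_of_ne fun p _ h => by_contra fun hni => h (hzero p hni)).symm
  rw [hexp S]
  have hmaps : ∀ p ∈ (Fintype.piFinset fun _ : Fin r => S).filter Function.Injective,
      Finset.image p Finset.univ ∈ S.powersetCard r := by
    intro p hp
    rw [Finset.mem_filter] at hp
    rw [Finset.mem_powersetCard]
    constructor
    · intro x hx
      obtain ⟨a, -, rfl⟩ := Finset.mem_image.mp hx
      exact Fintype.mem_piFinset.mp hp.1 a
    · rw [Finset.card_image_of_injective _ hp.2, Finset.card_univ, Fintype.card_fin]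
  rw [← Finset.sum_fiberwise_of_maps_to hmaps term]
  refine Finset.sum_congr rfl fun T hT => ?_
  rw [hexp T]
  rw [Finset.mem_powersetCard] at hT
  refine Finset.sum_congr ?_ fun _ _ => rfl
  ext p
  simp only [Finset.mem_filter, Fintype.mem_piFinset]
  constructor
  · rintro ⟨⟨hpS, hinj⟩, himg⟩
    exact ⟨fun a => himg ▸ Finset.mem_image_of_mem p (Finset.mem_univ a), hinj⟩
  · rintro ⟨hpT, hinj⟩
    refine ⟨⟨fun a => hT.1 (hpT a), hinj⟩, ?_⟩
    apply Finset.eq_of_subset_of_card_le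
    · intro x hx
      obtain ⟨a, -, rfl⟩ := Finset.mem_image.mp hx
      exact hpT a
    · rw [Finset.card_image_of_injective _ hinj, Finset.card_univ, Fintype.card_fin, hT.2]

private lemma dvs_count_supersets {m r k : ℕ} (hrk : r ≤ k) (T : Finset (Fin m))
    (hT : T.card = r) :
    ((Finset.univ.powersetCard k).filter (fun S => T ⊆ S)).card = (m - r).choose (k - r) := by
  classical
  have key : ((Finset.univ.powersetCard k).filter (fun S => T ⊆ S)).card
      = (Tᶜ.powersetCard (k - r)).card := by
    apply Finset.card_bij' (fun S _ => S \ T) (fun U _ => U ∪ T)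
    · intro S hS
      rw [Finset.mem_filter, Finset.mem_powersetCard] at hS
      rw [Finset.mem_powersetCard]
      refine ⟨fun x hx => ?_, ?_⟩
      · rw [Finset.mem_compl]
        exact (Finset.mem_sdiff.mp hx).2
      · rw [Finset.card_sdiff_of_subset hS.2, hS.1.2, hT]
    · intro U hU
      rw [Finset.mem_powersetCard] at hU
      rw [Finset.mem_filter, Finset.mem_powersetCard]
      have hdisj : Disjoint U T := by
        rw [Finset.disjoint_right]
        intro x hxT hxU
        exact (Finset.mem_compl.mp (hU.1 hxU)) hxT
      refine ⟨⟨Finset.subset_univ _, ?_⟩, Finset.subset_union_right⟩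
      rw [Finset.card_union_of_disjoint hdisj, hU.2, hT]
      omega
    · intro S hS
      rw [Finset.mem_filter] at hS
      exact Finset.sdiff_union_of_subset hS.2
    · intro U hU
      rw [Finset.mem_powersetCard] at hU
      have hdisj : Disjoint U T := by
        rw [Finset.disjoint_right]
        intro x hxT hxU
        exact (Finset.mem_compl.mp (hU.1 hxU)) hxT
      exact Finset.union_sdiff_cancel_right hdisj
  rw [key, Finset.card_powersetCard, Finset.card_compl, Fintype.card_fin, hT]

/-- **Frobenius-norm bound for dual volume sampling (A-optimality).**
If every `n`-or-more column submatrix of `A` has full row rank `n` and `n ≤ k ≤ m`, then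
`∑_{|S| = k} det(A_S A_Sᵀ) tr((A_S A_Sᵀ)⁻¹)
   ≤ ((m-n+1)/(k-n+1)) C(m-n, k-n) det(A Aᵀ) tr((A Aᵀ)⁻¹)`;
equivalently, for `S` drawn by dual volume sampling,
`𝔼[‖A_S^†‖_F²] ≤ ((m-n+1)/(k-n+1)) ‖A^†‖_F²`. -/
theorem dvs_expected_frobenius_bound {n m : ℕ} (A : Matrix (Fin n) (Fin m) ℝ)
    (hrank : ∀ S : Finset (Fin m), n ≤ S.card → (dvsCols A S).rank = n)
    (k : ℕ) (hnk : n ≤ k) (hkm : k ≤ m) :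
    ∑ S ∈ Finset.univ.powersetCard k, (dvsGram A S).det * ((dvsGram A S)⁻¹).trace
      ≤ (((m : ℝ) - n + 1) / ((k : ℝ) - n + 1)) * ((m - n).choose (k - n) : ℝ)
          * (A * Aᵀ).det * ((A * Aᵀ)⁻¹).trace := by
  classical
  rcases Nat.eq_zero_or_pos n with hn | hn
  · subst hn
    simp [Matrix.trace]
  obtain ⟨r, rfl⟩ : ∃ r, n = r + 1 := ⟨n - 1, (Nat.succ_pred_eq_of_pos hn).symm⟩
  -- the Gram matrix is a product with its transpose
  have hgram_eq : ∀ S : Finset (Fin m), dvsGram A S = dvsCols A S * (dvsCols A S)ᵀ := by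
    intro S
    ext i j
    rw [Matrix.mul_apply]
    simp only [dvsGram, dvsCols, Matrix.of_apply, Matrix.transpose_apply,
      Matrix.submatrix_apply, id]
    exact (Finset.sum_coe_sort S (fun t => A i t * A j t)).symm
  -- nonvanishing determinants
  have hdet : ∀ S : Finset (Fin m), r + 1 ≤ S.card → (dvsGram A S).det ≠ 0 := by
    intro S hS
    have h2 : (dvsGram A S).rank = r + 1 := by
      rw [hgram_eq S, Matrix.rank_self_mul_transpose, hrank S hS]
    have hsurj : Function.Surjective (dvsGram A S).mulVecLin := by
      rw [← LinearMap.range_eq_top]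
      apply Submodule.eq_top_of_finrank_eq
      rw [show (Module.finrank ℝ (LinearMap.range (dvsGram A S).mulVecLin))
          = (dvsGram A S).rank from rfl, h2,
        Module.finrank_fintype_fun_eq_card, Fintype.card_fin]
    have hinj : Function.Injective (dvsGram A S).mulVecLin :=
      (LinearMap.injective_iff_surjective).mpr hsurj
    have hu : IsUnit (dvsGram A S) := by
      rw [← Matrix.mulVec_injective_iff_isUnit]
      exact hinj
    exact ((Matrix.isUnit_iff_isUnit_det _).mp hu).ne_zero
  -- the sum of the principal (n-1)-minors of the Gram matrix
  set h : Finset (Fin m) → ℝ :=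
    fun S => ∑ i : Fin (r+1), ((dvsGram A S).submatrix i.succAbove i.succAbove).det with hh
  -- Step A : det * trace of inverse = h
  have hA : ∀ S : Finset (Fin m), (dvsGram A S).det ≠ 0 →
      (dvsGram A S).det * ((dvsGram A S)⁻¹).trace = h S := by
    intro S hd
    rw [Matrix.inv_def, Matrix.trace_smul, Ring.inverse_eq_inv, smul_eq_mul, ← mul_assoc,
      mul_inv_cancel₀ hd, one_mul]
    simp only [Matrix.trace, Matrix.diag_apply, hh]
    exact Finset.sum_congr rfl fun i _ => dvs_adj_diag _ i
  -- Step B : Cauchy–Binet type expansion of h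
  have hB : ∀ S : Finset (Fin m), h S = ∑ T ∈ S.powersetCard r, h T := by
    intro S
    have e : ∀ i : Fin (r+1),
        ((dvsGram A S).submatrix i.succAbove i.succAbove).det
          = ∑ T ∈ S.powersetCard r,
              ((dvsGram A T).submatrix i.succAbove i.succAbove).det :=
      fun i => dvs_gramCB (fun t a => A (i.succAbove a) t) S
    simp only [hh]
    calc (∑ i : Fin (r+1), ((dvsGram A S).submatrix i.succAbove i.succAbove).det)
        = ∑ i : Fin (r+1), ∑ T ∈ S.powersetCard r,
            ((dvsGram A T).submatrix i.succAbove i.succAbove).det :=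
          Finset.sum_congr rfl fun i _ => e i
      _ = _ := Finset.sum_comm
  -- counting supersets
  have hps : ∀ S : Finset (Fin m), S.powersetCard r
      = (Finset.univ.powersetCard r).filter (fun T => T ⊆ S) := by
    intro S
    ext T
    simp only [Finset.mem_powersetCard, Finset.mem_filter, Finset.subset_univ, true_and]
    exact and_comm
  have main : ∑ S ∈ Finset.univ.powersetCard k, h S
      = ((m - r).choose (k - r) : ℝ) * h Finset.univ := by
    calc ∑ S ∈ Finset.univ.powersetCard k, h S
        = ∑ S ∈ Finset.univ.powersetCard k, ∑ T ∈ Finset.univ.powersetCard r,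
            if T ⊆ S then h T else 0 := by
          refine Finset.sum_congr rfl fun S _ => ?_
          rw [hB S, hps S, Finset.sum_filter]
      _ = ∑ T ∈ Finset.univ.powersetCard r, ∑ S ∈ Finset.univ.powersetCard k,
            if T ⊆ S then h T else 0 := Finset.sum_comm
      _ = ∑ T ∈ Finset.univ.powersetCard r, ((m - r).choose (k - r) : ℝ) * h T := by
          refine Finset.sum_congr rfl fun T hT => ?_
          rw [← Finset.sum_filter, Finset.sum_const,
            dvs_count_supersets (by omega) T (Finset.mem_powersetCard.mp hT).2, nsmul_eq_mul]
      _ = ((m - r).choose (k - r) : ℝ) * ∑ T ∈ Finset.univ.powersetCard r, h T :=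
          (Finset.mul_sum _ _ _).symm
      _ = _ := by rw [← hB Finset.univ]
  -- full-matrix facts
  have huniv : dvsGram A Finset.univ = A * Aᵀ := by
    ext i j
    simp [dvsGram, Matrix.mul_apply]
  have hAu : (A * Aᵀ).det * ((A * Aᵀ)⁻¹).trace = h Finset.univ := by
    rw [← huniv]
    exact hA _ (hdet Finset.univ (by rw [Finset.card_univ, Fintype.card_fin]; omega))
  have hL : ∑ S ∈ Finset.univ.powersetCard k, (dvsGram A S).det * ((dvsGram A S)⁻¹).trace
      = ∑ S ∈ Finset.univ.powersetCard k, h S := by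
    refine Finset.sum_congr rfl fun S hS => hA S (hdet S ?_)
    rw [(Finset.mem_powersetCard.mp hS).2]
    omega
  rw [hL, main, ← hAu]
  apply le_of_eq
  -- coefficient identity
  have hkm' : r + 1 ≤ m := le_trans hnk hkm
  have hcoef : (((m : ℝ) - ((r+1 : ℕ) : ℝ) + 1) / ((k : ℝ) - ((r+1 : ℕ) : ℝ) + 1))
      * ((m - (r+1)).choose (k - (r+1)) : ℝ) = ((m - r).choose (k - r) : ℝ) := by
    set a : ℕ := k - (r+1) with ha
    set b : ℕ := m - (r+1) with hb
    have h1 : (m - r : ℕ) = b + 1 := by omega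
    have h2 : (k - r : ℕ) = a + 1 := by omega
    have h3 : ((m : ℝ) - ((r+1 : ℕ) : ℝ) + 1) = (b : ℝ) + 1 := by
      rw [hb, Nat.cast_sub hkm']
    have h4 : ((k : ℝ) - ((r+1 : ℕ) : ℝ) + 1) = (a : ℝ) + 1 := by
      rw [ha, Nat.cast_sub hnk]
    rw [h1, h2, h3, h4]
    have h5 : ((b : ℝ)+1) * (b.choose a : ℝ) = ((b+1).choose (a+1) : ℝ) * ((a : ℝ)+1) := by
      exact_mod_cast congrArg (Nat.cast (R := ℝ)) (Nat.add_one_mul_choose_eq b a)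
    have h6 : ((a:ℝ)+1) ≠ 0 := by positivity
    field_simp
    linarith [h5]
  rw [← hcoef]
  ring
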